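/- Let p, P : ℂ → ℂ be polynomials with p and P not identically zero, and let α be a nonconstant polynomial. Then it is impossible that exp(2α(z)) = c * P(z) / p(z)^2 for all z with p(z) ≠ 0, for any constant c ≠ 0. -/

import Mathlib

open Polynomial

theorem stmt5 (p P α : Polynomial ℂ) (hp : p ≠ 0) (hP : P ≠ 0)
    (hα : 1 ≤ α.natDegree) (c : ℂ) (hc : c ≠ 0) :
    ¬ (∀ z : ℂ, p.eval z ≠ 0 →
        Complex.exp (2 * α.eval z) * (p.eval z) ^ 2 = c * P.eval z) := by
  intro h
  have hα' : derivative α ≠ 0 := by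
    intro h0
    have := Polynomial.natDegree_eq_zero_of_derivative_eq_zero h0
    omega
  -- openness of the nonvanishing set of p
  have hU : IsOpen {w : ℂ | p.eval w ≠ 0} :=
    isOpen_compl_singleton.preimage p.continuous
  -- derivative identity at points where p ≠ 0
  have key : ∀ z : ℂ, p.eval z ≠ 0 →
      Complex.exp (2 * α.eval z) *
        (2 * (derivative α).eval z * p.eval z ^ 2
          + 2 * p.eval z * (derivative p).eval z) = c * (derivative P).eval z := by
    intro z hz
    have h1 := (((α.hasDerivAt z).const_mul (2 : ℂ)).cexp).mul ((p.hasDerivAt z).pow 2)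
    have h2 : HasDerivAt (fun w => c * P.eval w) (c * (derivative P).eval z) z :=
      (P.hasDerivAt z).const_mul c
    have heq : (fun w => c * P.eval w) =ᶠ[nhds z]
        fun w => Complex.exp (2 * α.eval w) * p.eval w ^ 2 := by
      filter_upwards [hU.mem_nhds hz] with w hw
      exact (h w hw).symm
    have h3 := h1.congr_of_eventuallyEq heq
    have h4 := h3.unique h2
    rw [← h4]
    push_cast
    simp only [Pi.pow_apply]
    ring
  -- polynomial identity
  set A : Polynomial ℂ := C 2 * (derivative α) * p ^ 2 + C 2 * p * derivative p with hA
  have hmain : P * A = derivative P * p ^ 2 := by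
    have hq0 : P * A - derivative P * p ^ 2 = 0 := by
      apply Polynomial.eq_zero_of_infinite_isRoot
      apply Set.Infinite.mono ?_ ((Polynomial.finite_setOf_isRoot hp).infinite_compl)
      intro z hz
      have hz' : p.eval z ≠ 0 := hz
      have h0 := h z hz'
      have hk := key z hz'
      have hp2 : p.eval z ^ 2 ≠ 0 := pow_ne_zero _ hz'
      have hexp : Complex.exp (2 * α.eval z) = c * P.eval z / p.eval z ^ 2 := by
        rw [eq_div_iff hp2]; exact h0
      rw [hexp] at hk
      show (P * A - derivative P * p ^ 2).eval z = 0
      simp only [hA, eval_sub, eval_mul, eval_add, eval_pow, eval_C]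
      field_simp at hk
      have hk' : P.eval z * (2 * (derivative α).eval z * p.eval z ^ 2
          + 2 * p.eval z * (derivative p).eval z) = (derivative P).eval z * p.eval z ^ 2 := by
        apply mul_left_cancel₀ hc
        linear_combination (c * eval z p) * hk
      linear_combination hk'
    exact sub_eq_zero.mp hq0
  -- A is nonzero and its natDegree is (natDegree α') + 2 * natDegree p
  have hB : C (2:ℂ) * derivative α * p ^ 2 ≠ 0 := by
    apply mul_ne_zero (mul_ne_zero (by simp) hα') (pow_ne_zero _ hp)
  have hBdeg : (C (2:ℂ) * derivative α * p ^ 2).natDegree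
      = (derivative α).natDegree + 2 * p.natDegree := by
    rw [natDegree_mul (mul_ne_zero (by simp) hα') (pow_ne_zero _ hp),
      natDegree_mul (by simp : (C (2:ℂ)) ≠ 0) hα', natDegree_C, natDegree_pow]
    ring
  have hAfacts : A ≠ 0 ∧ A.natDegree = (derivative α).natDegree + 2 * p.natDegree := by
    by_cases hp' : derivative p = 0
    · constructor
      · simpa [hA, hp'] using hB
      · simp [hA, hp', hBdeg]
    · have hpd : 1 ≤ p.natDegree := by
        by_contra hh
        exact hp' (derivative_of_natDegree_zero (by omega))
      have hCdeg : (C (2:ℂ) * p * derivative p).natDegree < 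
          (C (2:ℂ) * derivative α * p ^ 2).natDegree := by
        have h1 : (C (2:ℂ) * p * derivative p).natDegree
            = p.natDegree + (derivative p).natDegree := by
          rw [natDegree_mul (mul_ne_zero (by simp) hp) hp',
            natDegree_mul (by simp : (C (2:ℂ)) ≠ 0) hp, natDegree_C]
          ring
        have h2 := p.natDegree_derivative_le
        rw [h1, hBdeg]
        omega
      constructor
      · rw [hA]
        intro h0
        have hBe : C (2:ℂ) * derivative α * p ^ 2 = -(C 2 * p * derivative p) := by
          linear_combination h0
        rw [← natDegree_neg (C (2:ℂ) * p * derivative p), ← hBe] at hCdeg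
        exact lt_irrefl _ hCdeg
      · rw [hA, natDegree_add_eq_left_of_natDegree_lt hCdeg, hBdeg]
  obtain ⟨hAne, hAdeg⟩ := hAfacts
  by_cases hP' : derivative P = 0
  · rw [hP'] at hmain
    simp only [zero_mul] at hmain
    exact (mul_ne_zero hP hAne) hmain
  · have hPd : 1 ≤ P.natDegree := by
      by_contra hh
      exact hP' (derivative_of_natDegree_zero (by omega))
    have hdeg := congrArg natDegree hmain
    rw [natDegree_mul hP hAne, natDegree_mul hP' (pow_ne_zero _ hp),
      natDegree_pow, hAdeg] at hdeg
    have h2 := P.natDegree_derivative_le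
    omega
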